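/- Let 𝔖 = {(A_ξ, F_ξ, 𝔅_ξ)}_{ξ∈W} be a tower of permutations and suppose there is a countable subset C' ⊆ W that is cofinal in W (for every ξ ∈ W there is ζ ∈ C' with ξ ≤ ζ). Then ℚ(𝔖) has a σ-centred dense subset: there is a dense D ⊆ ℚ(𝔖) that is a countable union of sets D_n such that every finite subset of each D_n has a common upper bound in ℚ(𝔖). -/

import Mathlib

/-- A finite subalgebra of the Boolean algebra `𝒫(ℕ)` of subsets of `ℕ`. -/
def IsFiniteSubalgebra (𝔅 : Set (Set ℕ)) : Prop :=
  𝔅.Finite ∧ ∅ ∈ 𝔅 ∧ Set.univ ∈ 𝔅 ∧ (∀ X ∈ 𝔅, Xᶜ ∈ 𝔅) ∧ ∀ X ∈ 𝔅, ∀ Y ∈ 𝔅, X ∪ Y ∈ 𝔅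

/-- A tower of permutations `𝔖 = {(A_ξ, F_ξ, 𝔅_ξ)}_{ξ ∈ W}` indexed by a set `W`
of ordinals. -/
structure Tower (W : Set Ordinal) where
  /-- the sets `A_ξ` -/
  A : Ordinal → Set ℕ
  /-- the permutations `F_ξ` of `ℕ` -/
  F : Ordinal → (ℕ → ℕ)
  /-- the finite subalgebras `𝔅_ξ` -/
  Alg : Ordinal → Set (Set ℕ)
  A_inf : ∀ ξ ∈ W, (A ξ).Infinite
  F_bij : ∀ ξ ∈ W, Function.Bijective (F ξ)
  F_seg : ∀ ξ ∈ W, ∀ m ∈ A ξ, Set.BijOn (F ξ) (Set.Iio m) (Set.Iio m)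
  Alg_fin : ∀ ξ ∈ W, IsFiniteSubalgebra (Alg ξ)
  Alg_mono : ∀ ξ ∈ W, ∀ ζ ∈ W, ξ < ζ → Alg ξ ⊆ Alg ζ
  A_ae_sub : ∀ ξ ∈ W, ∀ ζ ∈ W, ξ < ζ → (A ζ \ A ξ).Finite
  F_ae_eq : ∀ ξ ∈ W, ∀ ζ ∈ W, ξ < ζ → ∀ B ∈ Alg ξ,
    (symmDiff (F ζ '' B) (F ξ '' B)).Finite

/-- A condition `p = (a^p, f^p, α^p, 𝔅^p)` in the forcing `ℚ(𝔖)`.  The finite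
partial function `f^p` (whose domain is `{0, …, max(a^p) − 1}`) is modelled as a
total function on `ℕ` which is the identity from `max(a^p)` onwards. -/
structure QCond {W : Set Ordinal} (S : Tower W) where
  /-- the finite nonempty set `a^p` -/
  a : Finset ℕ
  /-- the finite partial permutation `f^p` -/
  f : ℕ → ℕ
  /-- the ordinal `α^p ∈ W` -/
  α : Ordinal
  /-- the finite subalgebra `𝔅^p` -/
  Alg : Set (Set ℕ)
  a_ne : a.Nonempty
  f_seg : ∀ m ∈ a, Set.BijOn f (Set.Iio m) (Set.Iio m)
  f_pad : ∀ i, a.max' a_ne ≤ i → f i = i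
  α_mem : α ∈ W
  max_mem : a.max' a_ne ∈ S.A α
  Alg_fin : IsFiniteSubalgebra Alg

namespace QCond

variable {W : Set Ordinal} {S : Tower W}

/-- `max (a^p)`. -/
def top (p : QCond S) : ℕ := p.a.max' p.a_ne

/-- The order `p ≤ q` on `ℚ(𝔖)`. -/
def le (p q : QCond S) : Prop :=
  p.a ⊆ q.a ∧
  q.a.filter (fun n => n ≤ p.top) = p.a ∧
  (∀ i, i < p.top → q.f i = p.f i) ∧
  p.Alg ⊆ q.Alg ∧
  p.α ≤ q.α ∧
  ({n : ℕ | n ∈ S.A q.α ∧ q.top ≤ n} ∪ ((↑q.a : Set ℕ) \ ↑p.a)) ⊆ S.A p.α ∧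
  ∀ B ∈ p.Alg ∩ S.Alg p.α,
    (∀ m ∈ q.a, ∀ n ∈ q.a, p.top ≤ m → m < n →
      q.f '' (B ∩ Set.Ico m n) = S.F p.α '' (B ∩ Set.Ico m n)) ∧
    (∀ m ∈ S.A q.α, ∀ n ∈ S.A q.α, q.top ≤ m → m < n →
      S.F q.α '' (B ∩ Set.Ico m n) = S.F p.α '' (B ∩ Set.Ico m n))

/-- A subset `D ⊆ ℚ(𝔖)` is dense. -/
def IsDense (D : Set (QCond S)) : Prop := ∀ p : QCond S, ∃ q ∈ D, le p q

/-- Two conditions are compatible. -/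
def Compatible (p q : QCond S) : Prop := ∃ r : QCond S, le p r ∧ le q r

end QCond


theorem exists_finiteSubalgebra_superset (G : Set (Set ℕ)) (hG : G.Finite) :
    ∃ 𝔅, IsFiniteSubalgebra 𝔅 ∧ G ⊆ 𝔅 := by
  classical
  set φ : ℕ → Set (Set ℕ) := fun n => {X ∈ G | n ∈ X} with hφ
  set 𝔄 : Set (Set ℕ) := {Y : Set ℕ | ∀ a b, φ a = φ b → (a ∈ Y ↔ b ∈ Y)} with h𝔄
  have hsat : ∀ Y ∈ 𝔄, ∀ a b, φ a = φ b → (a ∈ Y ↔ b ∈ Y) := fun Y hY => hY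
  refine ⟨𝔄, ⟨?_, ?_, ?_, ?_, ?_⟩, ?_⟩
  · -- finiteness
    have hinj : Set.InjOn (fun Y => φ '' Y) 𝔄 := by
      intro Y1 h1 Y2 h2 he
      ext x
      constructor
      · intro hx
        have he' : φ '' Y1 = φ '' Y2 := he
        have : φ x ∈ φ '' Y2 := by rw [← he']; exact ⟨x, hx, rfl⟩
        obtain ⟨y, hy, hxy⟩ := this
        exact (h2 y x hxy).1 hy
      · intro hx
        have he' : φ '' Y1 = φ '' Y2 := he
        have : φ x ∈ φ '' Y1 := by rw [he']; exact ⟨x, hx, rfl⟩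
        obtain ⟨y, hy, hxy⟩ := this
        exact (h1 y x hxy).1 hy
    apply Set.Finite.of_finite_image _ hinj
    apply Set.Finite.subset (hG.finite_subsets.finite_subsets)
    rintro _ ⟨Y, _, rfl⟩
    intro T hT
    obtain ⟨n, _, rfl⟩ := hT
    intro X hX
    exact hX.1
  · intro a b _; simp
  · intro a b _; simp
  · intro X hX a b hab
    simp only [Set.mem_compl_iff]
    exact not_congr (hX a b hab)
  · intro X hX Y hY a b hab
    simp only [Set.mem_union]
    exact or_congr (hX a b hab) (hY a b hab)
  · intro X hX a b hab
    have ha : a ∈ X ↔ X ∈ φ a := by simp [hφ, hX]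
    have hb : b ∈ X ↔ X ∈ φ b := by simp [hφ, hX]
    rw [ha, hb, hab]

theorem bijOn_Ico_of_bijOn_Iio {F : ℕ → ℕ} (hinj : Function.Injective F) {m n : ℕ}
    (hm : Set.BijOn F (Set.Iio m) (Set.Iio m)) (hn : Set.BijOn F (Set.Iio n) (Set.Iio n)) :
    Set.BijOn F (Set.Ico m n) (Set.Ico m n) := by
  refine ⟨?_, fun x _ y _ h => hinj h, ?_⟩
  · rintro x ⟨hxm, hxn⟩
    refine ⟨?_, hn.mapsTo hxn⟩
    by_contra h
    push_neg at h
    obtain ⟨x', hx', hfx⟩ := hm.surjOn h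
    have := hinj hfx
    simp only [Set.mem_Iio] at hx'
    omega
  · rintro y ⟨hym, hyn⟩
    obtain ⟨x, hx, rfl⟩ := hn.surjOn hyn
    refine ⟨x, ⟨?_, hx⟩, rfl⟩
    by_contra h
    push_neg at h
    have := hm.mapsTo h
    simp only [Set.mem_Iio] at this
    omega

theorem image_inter_Ico_eq {F : ℕ → ℕ} (hinj : Function.Injective F) {m n : ℕ}
    (hm : Set.BijOn F (Set.Iio m) (Set.Iio m)) (hn : Set.BijOn F (Set.Iio n) (Set.Iio n))
    (B : Set ℕ) : F '' (B ∩ Set.Ico m n) = (F '' B) ∩ Set.Ico m n := by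
  ext y
  constructor
  · rintro ⟨x, ⟨hxB, hxm, hxn⟩, rfl⟩
    refine ⟨⟨x, hxB, rfl⟩, ?_, hn.mapsTo hxn⟩
    by_contra h
    push_neg at h
    obtain ⟨x', hx', hfx⟩ := hm.surjOn h
    have := hinj hfx
    simp only [Set.mem_Iio] at hx'
    omega
  · rintro ⟨⟨x, hxB, rfl⟩, hym, hyn⟩
    obtain ⟨x', hx', hfx⟩ := hn.surjOn hyn
    have hxx : x' = x := hinj hfx
    subst hxx
    refine ⟨x', ⟨hxB, ?_, hx'⟩, rfl⟩
    by_contra h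
    push_neg at h
    have := hm.mapsTo h
    simp only [Set.mem_Iio] at this
    omega

theorem max'_insert_of_gt {a : Finset ℕ} {n₀ : ℕ} (h : a.Nonempty) (hn : a.max' h < n₀)
    (h' : (insert n₀ a).Nonempty) : (insert n₀ a).max' h' = n₀ := by
  apply le_antisymm
  · apply Finset.max'_le
    intro y hy
    rcases Finset.mem_insert.1 hy with rfl | hy
    · exact le_refl _
    · exact le_of_lt (lt_of_le_of_lt (Finset.le_max' a y hy) hn)
  · exact Finset.le_max' _ _ (Finset.mem_insert_self _ _)

theorem core_ext {W : Set Ordinal} {S : Tower W} (p : QCond S) (β : Ordinal)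
    (𝔅' : Set (Set ℕ)) (n₀ : ℕ)
    (hβW : β ∈ W) (hαβ : p.α ≤ β) (h𝔅 : IsFiniteSubalgebra 𝔅')
    (hgt : p.top < n₀) (hn₀β : n₀ ∈ S.A β) (hn₀α : n₀ ∈ S.A p.α)
    (htail : ∀ n ∈ S.A β, n₀ ≤ n → n ∈ S.A p.α)
    (hF : ∀ B ∈ 𝔅' ∩ S.Alg p.α, ∀ k, n₀ ≤ k → (k ∈ S.F β '' B ↔ k ∈ S.F p.α '' B)) :
    ∃ q : QCond S, q.α = β ∧ q.Alg = 𝔅' ∧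
      ∀ p' : QCond S, p'.a = p.a → p'.f = p.f → p'.α = p.α → p'.Alg ⊆ 𝔅' →
        QCond.le p' q := by
  classical
  have hTa : p.top ∈ p.a := p.a.max'_mem p.a_ne
  have hTA : p.top ∈ S.A p.α := p.max_mem
  have hub : ∀ x ∈ p.a, x ≤ p.top := fun x hx => Finset.le_max' _ _ hx
  set f' : ℕ → ℕ := fun i => if i < p.top then p.f i else if i < n₀ then S.F p.α i else i
    with hf'
  have hEq1 : Set.EqOn p.f f' (Set.Iio p.top) := by
    intro i hi
    simp only [Set.mem_Iio] at hi
    simp [hf', hi]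
  have hEq2 : Set.EqOn (S.F p.α) f' (Set.Ico p.top n₀) := by
    intro i hi
    simp only [Set.mem_Ico] at hi
    have h1 : ¬ i < p.top := by omega
    simp [hf', h1, hi.2]
  have hFinj : Function.Injective (S.F p.α) := (S.F_bij p.α p.α_mem).1
  have hbijT : Set.BijOn f' (Set.Iio p.top) (Set.Iio p.top) :=
    (p.f_seg p.top hTa).congr hEq1
  have hbijIco : Set.BijOn f' (Set.Ico p.top n₀) (Set.Ico p.top n₀) :=
    (bijOn_Ico_of_bijOn_Iio hFinj (S.F_seg p.α p.α_mem p.top hTA)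
      (S.F_seg p.α p.α_mem n₀ hn₀α)).congr hEq2
  have hinj' : Set.InjOn f' (Set.Iio p.top ∪ Set.Ico p.top n₀) := by
    rintro x (hx | hx) y (hy | hy) he
    · exact hbijT.injOn hx hy he
    · have h1 := hbijT.mapsTo hx
      have h2 := hbijIco.mapsTo hy
      simp only [Set.mem_Iio, Set.mem_Ico] at h1 h2
      omega
    · have h1 := hbijIco.mapsTo hx
      have h2 := hbijT.mapsTo hy
      simp only [Set.mem_Iio, Set.mem_Ico] at h1 h2
      omega
    · exact hbijIco.injOn hx hy he
  have hbijn₀ : Set.BijOn f' (Set.Iio n₀) (Set.Iio n₀) := by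
    rw [← Set.Iio_union_Ico_eq_Iio (le_of_lt hgt)]
    exact hbijT.union hbijIco hinj'
  have hne : (insert n₀ p.a).Nonempty := ⟨n₀, Finset.mem_insert_self _ _⟩
  have htop : (insert n₀ p.a).max' hne = n₀ := max'_insert_of_gt p.a_ne hgt hne
  have hseg : ∀ m ∈ insert n₀ p.a, Set.BijOn f' (Set.Iio m) (Set.Iio m) := by
    intro m hm
    rcases Finset.mem_insert.1 hm with rfl | hm
    · exact hbijn₀
    · have hmT : m ≤ p.top := hub m hm
      exact (p.f_seg m hm).congr (hEq1.mono (Set.Iio_subset_Iio hmT))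
  have hpad : ∀ i, (insert n₀ p.a).max' hne ≤ i → f' i = i := by
    intro i hi
    rw [htop] at hi
    have h1 : ¬ i < p.top := by omega
    have h2 : ¬ i < n₀ := by omega
    simp [hf', h1, h2]
  have hmax : (insert n₀ p.a).max' hne ∈ S.A β := by rw [htop]; exact hn₀β
  set q : QCond S := ⟨insert n₀ p.a, f', β, 𝔅', hne, hseg, hpad, hβW, hmax, h𝔅⟩ with hq
  have hqtop : q.top = n₀ := htop
  refine ⟨q, rfl, rfl, ?_⟩
  intro p' ha hf hα hAlg
  have htop' : p'.top = p.top := by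
    unfold QCond.top
    congr 1
  refine ⟨?_, ?_, ?_, hAlg, ?_, ?_, ?_⟩
  · rw [ha]; exact fun x hx => Finset.mem_insert_of_mem hx
  · ext x
    show x ∈ Finset.filter (fun n => n ≤ p'.top) (insert n₀ p.a) ↔ x ∈ p'.a
    simp only [Finset.mem_filter, Finset.mem_insert, ha, htop']
    constructor
    · rintro ⟨rfl | hx, hle⟩
      · omega
      · exact hx
    · intro hx
      exact ⟨Or.inr hx, Finset.le_max' _ _ hx⟩
  · intro i hi
    rw [htop'] at hi
    show f' i = p'.f i
    rw [hf]
    simp [hf', hi]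
  · rw [hα]; exact hαβ
  · rintro x (⟨hxA, hxge⟩ | ⟨hxq, hxp⟩)
    · rw [hα]
      rw [hqtop] at hxge
      exact htail x hxA hxge
    · rw [hα]
      have hxq' : x ∈ insert n₀ p.a := hxq
      rcases Finset.mem_insert.1 hxq' with rfl | hx
      · exact hn₀α
      · exact absurd (by rw [ha]; exact hx) hxp
  · intro B hB
    have hB' : B ∈ 𝔅' ∩ S.Alg p.α := ⟨hAlg hB.1, hα ▸ hB.2⟩
    constructor
    · intro m hm n hn hTm hmn
      rw [htop'] at hTm
      have hm' : m ∈ insert n₀ p.a := hm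
      have hn' : n ∈ insert n₀ p.a := hn
      have hmeq : m = p.top := by
        rcases Finset.mem_insert.1 hm' with h1 | h1
        · exfalso
          rcases Finset.mem_insert.1 hn' with h2 | h2
          · omega
          · have := hub n h2
            omega
        · have := hub m h1
          omega
      have hneq : n = n₀ := by
        rcases Finset.mem_insert.1 hn' with h2 | h2
        · exact h2
        · have := hub n h2
          omega
      rw [hα, hmeq, hneq]
      show f' '' (B ∩ Set.Ico p.top n₀) = S.F p.α '' (B ∩ Set.Ico p.top n₀)
      exact ((hEq2.mono Set.inter_subset_right).image_eq).symm
    · intro m hm n hn hgem hmn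
      rw [hqtop] at hgem
      rw [hα]
      have hmA : m ∈ S.A p.α := htail m hm hgem
      have hnA : n ∈ S.A p.α := htail n hn (by omega)
      show S.F β '' (B ∩ Set.Ico m n) = S.F p.α '' (B ∩ Set.Ico m n)
      rw [image_inter_Ico_eq (S.F_bij β hβW).1 (S.F_seg β hβW m hm) (S.F_seg β hβW n hn) B,
        image_inter_Ico_eq hFinj (S.F_seg p.α p.α_mem m hmA) (S.F_seg p.α p.α_mem n hnA) B]
      ext k
      simp only [Set.mem_inter_iff, Set.mem_Ico]
      constructor
      · rintro ⟨hk, hk1, hk2⟩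
        exact ⟨(hF B hB' k (by omega)).1 hk, hk1, hk2⟩
      · rintro ⟨hk, hk1, hk2⟩
        exact ⟨(hF B hB' k (by omega)).2 hk, hk1, hk2⟩

theorem exists_good_n₀ {W : Set Ordinal} {S : Tower W} (p : QCond S) (ζ : Ordinal)
    (hζ : ζ ∈ W) (hle : p.α ≤ ζ) :
    ∃ n₀, p.top < n₀ ∧ n₀ ∈ S.A ζ ∧ n₀ ∈ S.A p.α ∧
      (∀ n ∈ S.A ζ, n₀ ≤ n → n ∈ S.A p.α) ∧
      ∀ B ∈ p.Alg ∩ S.Alg p.α, ∀ k, n₀ ≤ k → (k ∈ S.F ζ '' B ↔ k ∈ S.F p.α '' B) := by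
  rcases eq_or_lt_of_le hle with heq | hlt
  · rw [← heq]
    obtain ⟨n₀, hn₀, hgt⟩ := (S.A_inf p.α p.α_mem).exists_gt p.top
    exact ⟨n₀, hgt, hn₀, hn₀, fun n hn _ => hn, fun B _ k _ => Iff.rfl⟩
  · have hfin1 : (S.A ζ \ S.A p.α).Finite := S.A_ae_sub p.α p.α_mem ζ hζ hlt
    have hfin2 : (⋃ B ∈ p.Alg ∩ S.Alg p.α,
        symmDiff (S.F ζ '' B) (S.F p.α '' B)).Finite := by
      apply Set.Finite.biUnion (p.Alg_fin.1.subset Set.inter_subset_left)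
      intro B hB
      exact S.F_ae_eq p.α p.α_mem ζ hζ hlt B hB.2
    obtain ⟨N, hN⟩ := (hfin1.union hfin2).bddAbove
    obtain ⟨n₀, hn₀, hgtn⟩ := (S.A_inf ζ hζ).exists_gt (max p.top N)
    have hNb : ∀ x, x ∈ S.A ζ \ S.A p.α ∪ (⋃ B ∈ p.Alg ∩ S.Alg p.α,
        symmDiff (S.F ζ '' B) (S.F p.α '' B)) → x ≤ N := fun x hx => hN hx
    refine ⟨n₀, by omega, hn₀, ?_, ?_, ?_⟩
    · by_contra h
      have := hNb n₀ (Set.mem_union_left _ ⟨hn₀, h⟩)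
      omega
    · intro n hn hge
      by_contra h
      have := hNb n (Set.mem_union_left _ ⟨hn, h⟩)
      omega
    · intro B hB k hk
      have hk' : k ∉ symmDiff (S.F ζ '' B) (S.F p.α '' B) := by
        intro hmem
        have := hNb k (Set.mem_union_right _ (Set.mem_biUnion hB hmem))
        omega
      constructor
      · intro h1
        by_contra h2
        exact hk' (Set.mem_symmDiff.2 (Or.inl ⟨h1, h2⟩))
      · intro h2
        by_contra h1
        exact hk' (Set.mem_symmDiff.2 (Or.inr ⟨h2, h1⟩))

theorem dense_step {W : Set Ordinal} {S : Tower W} {C' : Set Ordinal} (hsub : C' ⊆ W)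
    (hcof : ∀ ξ ∈ W, ∃ ζ ∈ C', ξ ≤ ζ) (p : QCond S) :
    ∃ q : QCond S, q.α ∈ C' ∧ QCond.le p q := by
  obtain ⟨ζ, hζC, hle⟩ := hcof p.α p.α_mem
  have hζW := hsub hζC
  obtain ⟨n₀, h1, h2, h3, h4, h5⟩ := exists_good_n₀ p ζ hζW hle
  obtain ⟨q, hqα, hqAlg, hq⟩ :=
    core_ext p ζ p.Alg n₀ hζW hle p.Alg_fin h1 h2 h3 h4 h5
  exact ⟨q, hqα ▸ hζC, hq p rfl rfl rfl subset_rfl⟩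

/-- If some countable `C' ⊆ W` is cofinal in `W` then `ℚ(𝔖)` has a σ-centred
dense subset: a dense set which is a countable union of sets, each of whose
finite (nonempty) subsets has a common upper bound in `ℚ(𝔖)`. -/
theorem sigmaCentred_of_countable_cofinal (W : Set Ordinal) (S : Tower W)
    (C' : Set Ordinal) (hsub : C' ⊆ W) (hcount : C'.Countable)
    (hcof : ∀ ξ ∈ W, ∃ ζ ∈ C', ξ ≤ ζ) :
    ∃ D : ℕ → Set (QCond S), QCond.IsDense (⋃ n, D n) ∧
      ∀ n : ℕ, ∀ P ⊆ D n, P.Finite → P.Nonempty →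
        ∃ r : QCond S, ∀ p ∈ P, QCond.le p r := by
  classical
  by_cases hex : ∃ q : QCond S, q.α ∈ C'
  · -- the set of "types" of conditions with ordinal in C'
    set U : Set (Finset ℕ × (ℕ → ℕ) × Ordinal) :=
      {t | ∃ q : QCond S, q.α ∈ C' ∧ (q.a, q.f, q.α) = t} with hU
    -- U is countable
    obtain ⟨c, hc⟩ := Set.countable_iff_exists_injOn.1 hcount
    have hUc : U.Countable := by
      rw [Set.countable_iff_exists_injOn]
      refine ⟨fun t => Encodable.encode
        (t.1, (List.range ((t.1.sup id) + 1)).map t.2.1, c t.2.2), ?_⟩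
      intro t ht t' ht' he
      have he' : (t.1, (List.range ((t.1.sup id) + 1)).map t.2.1, c t.2.2)
          = (t'.1, (List.range ((t'.1.sup id) + 1)).map t'.2.1, c t'.2.2) :=
        Encodable.encode_injective he
      obtain ⟨q, hqC, hqt⟩ := ht
      obtain ⟨q', hq'C, hq't⟩ := ht'
      have e1 : t.1 = t'.1 := congrArg (fun x : Finset ℕ × List ℕ × ℕ => x.1) he'
      have e2 : (List.range ((t.1.sup id) + 1)).map t.2.1
          = (List.range ((t'.1.sup id) + 1)).map t'.2.1 :=
        congrArg (fun x : Finset ℕ × List ℕ × ℕ => x.2.1) he'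
      have e3 : c t.2.2 = c t'.2.2 := congrArg (fun x : Finset ℕ × List ℕ × ℕ => x.2.2) he'
      have hqa : q.a = t.1 := congrArg Prod.fst hqt
      have hqf : q.f = t.2.1 := congrArg (fun x => x.2.1) hqt
      have hqα : q.α = t.2.2 := congrArg (fun x => x.2.2) hqt
      have hq'a : q'.a = t'.1 := congrArg Prod.fst hq't
      have hq'f : q'.f = t'.2.1 := congrArg (fun x => x.2.1) hq't
      have hq'α : q'.α = t'.2.2 := congrArg (fun x => x.2.2) hq't
      have hα2 : t.2.2 ∈ C' := hqα ▸ hqC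
      have hα2' : t'.2.2 ∈ C' := hq'α ▸ hq'C
      have eα : t.2.2 = t'.2.2 := hc hα2 hα2' e3
      rw [← e1] at e2
      have e2' : ∀ i ∈ List.range ((t.1.sup id) + 1), t.2.1 i = t'.2.1 i :=
        List.map_eq_map_iff.1 e2
      have ef : t.2.1 = t'.2.1 := by
        funext i
        by_cases hi : i < (t.1.sup id) + 1
        · exact e2' i (List.mem_range.2 hi)
        · push_neg at hi
          have hm : q.a.max' q.a_ne ≤ i := by
            have hmem : q.a.max' q.a_ne ∈ t.1 := hqa ▸ q.a.max'_mem q.a_ne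
            have h1 := Finset.le_sup (f := id) hmem
            simp only [id_eq] at h1
            omega
          have hm' : q'.a.max' q'.a_ne ≤ i := by
            have hmem : q'.a.max' q'.a_ne ∈ t.1 := by
              rw [e1, ← hq'a]
              exact q'.a.max'_mem q'.a_ne
            have h1 := Finset.le_sup (f := id) hmem
            simp only [id_eq] at h1
            omega
          rw [← hqf, ← hq'f, q.f_pad i hm, q'.f_pad i hm']
      exact Prod.ext_iff.2 ⟨e1, Prod.ext_iff.2 ⟨ef, eα⟩⟩
    have hUne : U.Nonempty := by
      obtain ⟨q, hq⟩ := hex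
      exact ⟨(q.a, q.f, q.α), q, hq, rfl⟩
    obtain ⟨e, heU⟩ := hUc.exists_eq_range hUne
    refine ⟨fun n => {q : QCond S | q.α ∈ C' ∧ (q.a, q.f, q.α) = e n}, ?_, ?_⟩
    · -- density
      intro p
      obtain ⟨q, hqC, hle⟩ := dense_step hsub hcof p
      have htU : (q.a, q.f, q.α) ∈ U := ⟨q, hqC, rfl⟩
      rw [heU] at htU
      obtain ⟨n, hn⟩ := htU
      exact ⟨q, Set.mem_iUnion.2 ⟨n, hqC, hn.symm⟩, hle⟩
    · -- centredness
      intro n P hP hfin hne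
      obtain ⟨p₀, hp₀⟩ := hne
      obtain ⟨hα₀C, h₀⟩ := hP hp₀
      -- a common finite subalgebra
      have hGfin : (⋃ p ∈ P, p.Alg).Finite :=
        hfin.biUnion (fun p _ => p.Alg_fin.1)
      obtain ⟨𝔅', h𝔅', hG⟩ := exists_finiteSubalgebra_superset _ hGfin
      obtain ⟨n₀, hn₀, hgt⟩ := (S.A_inf p₀.α p₀.α_mem).exists_gt p₀.top
      obtain ⟨q, hqα, hqAlg, hq⟩ :=
        core_ext p₀ p₀.α 𝔅' n₀ p₀.α_mem (le_refl _) h𝔅' hgt hn₀ hn₀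
          (fun m hm _ => hm) (fun B _ k _ => Iff.rfl)
      refine ⟨q, fun p hp => ?_⟩
      have h3 : p.a = p₀.a ∧ p.f = p₀.f ∧ p.α = p₀.α := by
        have h := (hP hp).2.trans h₀.symm
        simpa [Prod.ext_iff] using h
      exact hq p h3.1 h3.2.1 h3.2.2
        ((Set.subset_biUnion_of_mem hp).trans hG)
  · -- no conditions with ordinal in C' at all: then there are no conditions
    refine ⟨fun _ => ∅, ?_, ?_⟩
    · intro p
      exfalso
      obtain ⟨q, hq, _⟩ := dense_step hsub hcof p
      exact hex ⟨q, hq⟩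
    · intro n P hP _ hne
      obtain ⟨p, hp⟩ := hne
      exact absurd (hP hp) (Set.notMem_empty p)
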